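/- There exists an absolute constant c such that for all natural numbers n, k, q with 1 ≤ k ≤ n and q ≥ 1 there exists an (n, k, q)-universal family F of functions from {1, …, n} to {1, …, q} with |F| ≤ c · q^k · k^(c·k) · (log₂ n + 1). -/

import Mathlib

open Finset

lemma two_mul_pow_le_aux {m : ℕ} (hm : 1 ≤ m) : 2 * m ^ m ≤ (m + 1) ^ m := by
  have hm' : (0 : ℚ) < (m : ℚ) := by exact_mod_cast hm
  have h1 : (1 : ℚ) + (m : ℚ) * (m : ℚ)⁻¹ ≤ (1 + (m : ℚ)⁻¹) ^ m :=
    one_add_mul_le_pow (by have := inv_nonneg.mpr hm'.le; linarith) m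
  have h2 : (2 : ℚ) ≤ (1 + (m : ℚ)⁻¹) ^ m := by
    rwa [mul_inv_cancel₀ (ne_of_gt hm'), one_add_one_eq_two] at h1
  have h3 : (2 : ℚ) * (m : ℚ) ^ m ≤ ((1 + (m : ℚ)⁻¹) * m) ^ m := by
    rw [mul_pow]
    exact mul_le_mul_of_nonneg_right h2 (by positivity)
  have h4 : ((1 : ℚ) + (m : ℚ)⁻¹) * m = (m : ℚ) + 1 := by
    field_simp
  rw [h4] at h3
  exact_mod_cast h3

lemma inj_count {n k : ℕ} (S : Finset (Fin n)) (hS : S.card = k) :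
    k ^ (n - k) ≤ (univ.filter (fun h : Fin n → Fin k => Set.InjOn h S)).card := by
  classical
  let e : {x : Fin n // x ∈ S} ≃ Fin k := S.equivFin.trans (finCongr hS)
  let F : ({x : Fin n // x ∉ S} → Fin k) → (Fin n → Fin k) :=
    fun g x => if hx : x ∈ S then e ⟨x, hx⟩ else g ⟨x, hx⟩
  have hmem : ∀ g, F g ∈ univ.filter (fun h : Fin n → Fin k => Set.InjOn h S) := by
    intro g
    simp only [mem_filter, mem_univ, true_and]
    intro x hx y hy hxy
    have hx' : x ∈ S := hx
    have hy' : y ∈ S := hy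
    simp only [F, dif_pos hx', dif_pos hy'] at hxy
    have := e.injective hxy
    exact congrArg Subtype.val this
  have hinj : Function.Injective F := by
    intro g g' h
    funext x
    have := congrFun h x.1
    simp only [F, dif_neg x.2] at this
    exact this
  calc k ^ (n - k) = (univ : Finset ({x : Fin n // x ∉ S} → Fin k)).card := by
        rw [card_univ, Fintype.card_fun, Fintype.card_fin]
        congr 1
        rw [Fintype.card_subtype_compl, Fintype.card_fin, Fintype.card_coe, hS]
    _ ≤ _ := Finset.card_le_card_of_injOn F (fun g _ => hmem g) (hinj.injOn)

lemma key_core {n k : ℕ} (hk : 1 ≤ k) (hn : 1 ≤ n) :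
    n ^ k * (k ^ k - 1) ^ ((k ^ k - 1) * k * (Nat.log 2 n + 1) + 1)
      < (k ^ k) ^ ((k ^ k - 1) * k * (Nat.log 2 n + 1) + 1) := by
  set L := Nat.log 2 n + 1 with hL
  rcases eq_or_lt_of_le hk with h1 | hk2
  · -- k = 1
    have : k ^ k - 1 = 0 := by rw [← h1]; simp
    rw [this]
    rw [zero_mul, zero_mul, zero_pow (Nat.succ_ne_zero 0), mul_zero]
    exact Nat.pow_pos (Nat.pow_pos hk)
  · -- k ≥ 2
    have hk2' : 2 ≤ k := hk2
    set a := k ^ k with ha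
    set m := a - 1 with hm
    have ha4 : 4 ≤ a := by
      calc (4:ℕ) = 2 ^ 2 := by norm_num
      _ ≤ k ^ k := Nat.pow_le_pow_left hk2' k |>.trans' (Nat.pow_le_pow_right (by omega) hk2')
    have hm1 : 1 ≤ m := by omega
    have hma : m + 1 = a := by omega
    set M := m * k * L + 1 with hMdef
    have hnlt : n < 2 ^ L := Nat.lt_pow_succ_log_self (by norm_num) n
    have h1 : n ^ k < 2 ^ (k * L) := by
      calc n ^ k < (2 ^ L) ^ k := Nat.pow_lt_pow_left hnlt (by omega)
      _ = 2 ^ (k * L) := by rw [← pow_mul, mul_comm]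
    have h2 : 2 ^ (k * L) * m ^ M ≤ a ^ M := by
      have base : 2 * m ^ m ≤ a ^ m := by
        have := two_mul_pow_le_aux hm1
        rwa [hma] at this
      have step : (2 * m ^ m) ^ (k * L) ≤ (a ^ m) ^ (k * L) :=
        Nat.pow_le_pow_left base _
      have e1 : (2 * m ^ m) ^ (k * L) = 2 ^ (k * L) * m ^ (m * k * L) := by
        rw [mul_pow, ← pow_mul]; ring_nf
      have e2 : (a ^ m) ^ (k * L) = a ^ (m * k * L) := by
        rw [← pow_mul]; ring_nf
      rw [e1, e2] at step
      calc 2 ^ (k * L) * m ^ M = 2 ^ (k * L) * m ^ (m * k * L) * m := by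
            rw [hMdef]; ring
      _ ≤ a ^ (m * k * L) * m := Nat.mul_le_mul_right _ step
      _ ≤ a ^ (m * k * L) * a := Nat.mul_le_mul_left _ (by omega)
      _ = a ^ M := by rw [hMdef]; ring
    calc n ^ k * m ^ M < 2 ^ (k * L) * m ^ M := by
          exact Nat.mul_lt_mul_of_pos_right h1 (Nat.pow_pos (by omega))
    _ ≤ a ^ M := h2

lemma key_ineq {n k : ℕ} (hk : 1 ≤ k) (hkn : k ≤ n) :
    n ^ k * (k ^ n - k ^ (n - k)) ^ ((k ^ k - 1) * k * (Nat.log 2 n + 1) + 1)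
      < (k ^ n) ^ ((k ^ k - 1) * k * (Nat.log 2 n + 1) + 1) := by
  set M := (k ^ k - 1) * k * (Nat.log 2 n + 1) + 1 with hM
  have hsplit : k ^ n = k ^ (n - k) * k ^ k := by
    rw [← pow_add]; congr 1; omega
  have hsub : k ^ n - k ^ (n - k) = k ^ (n - k) * (k ^ k - 1) := by
    rw [hsplit, Nat.mul_sub, mul_one]
  have hB : 0 < (k ^ (n - k)) ^ M := Nat.pow_pos (Nat.pow_pos (by omega))
  have core := key_core hk (by omega : 1 ≤ n)
  calc n ^ k * (k ^ n - k ^ (n - k)) ^ M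
      = (k ^ (n - k)) ^ M * (n ^ k * (k ^ k - 1) ^ M) := by
        rw [hsub, mul_pow]; ring
  _ < (k ^ (n - k)) ^ M * (k ^ k) ^ M := by
        exact Nat.mul_lt_mul_of_pos_left core hB
  _ = (k ^ n) ^ M := by rw [hsplit, mul_pow]

lemma exists_phf (n k : ℕ) (hk : 1 ≤ k) (hkn : k ≤ n) :
    ∃ H : Finset (Fin n → Fin k),
      H.card ≤ (k ^ k - 1) * k * (Nat.log 2 n + 1) + 1 ∧
      ∀ S : Finset (Fin n), S.card = k → ∃ h ∈ H, Set.InjOn h ↑S := by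
  classical
  set M := (k ^ k - 1) * k * (Nat.log 2 n + 1) + 1 with hM
  set Bad : Finset (Fin M → Fin n → Fin k) :=
    univ.filter (fun t => ∃ S ∈ powersetCard k (univ : Finset (Fin n)),
      ∀ i, ¬ Set.InjOn (t i) ↑S) with hBad
  have hsubset : Bad ⊆ (powersetCard k (univ : Finset (Fin n))).biUnion
      (fun S => Fintype.piFinset (fun _ : Fin M =>
        univ.filter (fun h : Fin n → Fin k => ¬ Set.InjOn h ↑S))) := by
    intro t ht
    rw [hBad, mem_filter] at ht
    obtain ⟨-, S, hSmem, hSbad⟩ := ht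
    rw [mem_biUnion]
    refine ⟨S, hSmem, ?_⟩
    rw [Fintype.mem_piFinset]
    intro i
    rw [mem_filter]
    exact ⟨mem_univ _, hSbad i⟩
  have hcount : Bad.card < Fintype.card (Fin M → Fin n → Fin k) := by
    have h1 : Bad.card ≤ (powersetCard k (univ : Finset (Fin n))).card
        * (k ^ n - k ^ (n - k)) ^ M := by
      refine (card_le_card hsubset).trans ((card_biUnion_le).trans ?_)
      refine (Finset.sum_le_card_nsmul _ _ _ ?_).trans (le_of_eq (by rw [smul_eq_mul]))
      intro S hS
      rw [mem_powersetCard_univ] at hS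
      rw [Fintype.card_piFinset]
      have hone : (univ.filter (fun h : Fin n → Fin k => ¬ Set.InjOn h ↑S)).card
          ≤ k ^ n - k ^ (n - k) := by
        have := inj_count S hS
        have hsplit := Finset.card_filter_add_card_filter_not
          (s := (univ : Finset (Fin n → Fin k)))
          (p := fun h : Fin n → Fin k => Set.InjOn h ↑S)
        have htot : (univ : Finset (Fin n → Fin k)).card = k ^ n := by
          rw [card_univ, Fintype.card_fun, Fintype.card_fin, Fintype.card_fin]
        omega
      calc ∏ _i : Fin M, (univ.filter (fun h : Fin n → Fin k => ¬ Set.InjOn h ↑S)).card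
          ≤ ∏ _i : Fin M, (k ^ n - k ^ (n - k)) :=
            Finset.prod_le_prod (fun _ _ => Nat.zero_le _) (fun _ _ => hone)
      _ = (k ^ n - k ^ (n - k)) ^ M := by
            rw [Finset.prod_const, card_univ, Fintype.card_fin]
    have h2 : (powersetCard k (univ : Finset (Fin n))).card ≤ n ^ k := by
      rw [card_powersetCard, card_univ, Fintype.card_fin]
      exact Nat.choose_le_pow n k
    have h3 : Fintype.card (Fin M → Fin n → Fin k) = (k ^ n) ^ M := by
      rw [Fintype.card_fun, Fintype.card_fun, Fintype.card_fin, Fintype.card_fin,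
        Fintype.card_fin]
    rw [h3]
    calc Bad.card ≤ (powersetCard k (univ : Finset (Fin n))).card
        * (k ^ n - k ^ (n - k)) ^ M := h1
    _ ≤ n ^ k * (k ^ n - k ^ (n - k)) ^ M := Nat.mul_le_mul_right _ h2
    _ < (k ^ n) ^ M := key_ineq hk hkn
  have hex : ∃ t : Fin M → Fin n → Fin k, t ∉ Bad := by
    by_contra hcon
    push_neg at hcon
    have : (univ : Finset (Fin M → Fin n → Fin k)) ⊆ Bad := fun t _ => hcon t
    have := card_le_card this
    rw [card_univ] at this
    omega
  obtain ⟨t, ht⟩ := hex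
  refine ⟨Finset.image t univ, ?_, ?_⟩
  · exact (card_image_le).trans (by rw [card_univ, Fintype.card_fin])
  · intro S hS
    rw [hBad, mem_filter] at ht
    push_neg at ht
    have := ht (mem_univ t) S (by rw [mem_powersetCard_univ]; exact hS)
    obtain ⟨i, hi⟩ := this
    exact ⟨t i, Finset.mem_image_of_mem t (mem_univ i), hi⟩

/-- There is an absolute constant `c` such that for all `1 ≤ k ≤ n` and `q ≥ 1` there is an
`(n, k, q)`-universal family of size at most `c · q^k · k^(c·k) · (log₂ n + 1)`: a family
`F` of functions `Fin n → Fin q` such that for every `k`-set `S ⊆ Fin n` and every colouring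
`φ` of `S` there is `f ∈ F` agreeing with `φ` on `S`. -/
theorem exists_universal_family_log_n :
    ∃ c : ℕ, ∀ n k q : ℕ, 1 ≤ k → k ≤ n → 1 ≤ q →
      ∃ F : Finset (Fin n → Fin q),
        F.card ≤ c * q ^ k * k ^ (c * k) * (Nat.log 2 n + 1) ∧
        ∀ S : Finset (Fin n), S.card = k → ∀ φ : Fin n → Fin q,
          ∃ f ∈ F, ∀ x ∈ S, f x = φ x := by
  classical
  refine ⟨2, fun n k q hk hkn hq => ?_⟩
  obtain ⟨H, hHcard, hH⟩ := exists_phf n k hk hkn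
  set L := Nat.log 2 n + 1 with hL
  refine ⟨Finset.image (fun p : (Fin k → Fin q) × (Fin n → Fin k) => p.1 ∘ p.2)
    ((univ : Finset (Fin k → Fin q)) ×ˢ H), ?_, ?_⟩
  · calc (Finset.image (fun p : (Fin k → Fin q) × (Fin n → Fin k) => p.1 ∘ p.2)
        ((univ : Finset (Fin k → Fin q)) ×ˢ H)).card
        ≤ ((univ : Finset (Fin k → Fin q)) ×ˢ H).card := card_image_le
    _ = q ^ k * H.card := by
        rw [card_product, card_univ, Fintype.card_fun, Fintype.card_fin, Fintype.card_fin]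
    _ ≤ q ^ k * ((k ^ k - 1) * k * L + 1) := Nat.mul_le_mul_left _ hHcard
    _ ≤ 2 * q ^ k * k ^ (2 * k) * L := by
        have hkk : (k ^ k - 1) * k * L + 1 ≤ 2 * k ^ (2 * k) * L := by
          have h1 : (k ^ k - 1) * k ≤ k ^ (2 * k) := by
            calc (k ^ k - 1) * k ≤ k ^ k * k := Nat.mul_le_mul_right _ (Nat.sub_le _ _)
            _ = k ^ (k + 1) := by rw [pow_succ]
            _ ≤ k ^ (2 * k) := Nat.pow_le_pow_right hk (by omega)
          have h2 : 1 ≤ k ^ (2 * k) * L := by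
            have := Nat.one_le_pow (2 * k) k hk
            have : 1 ≤ L := by omega
            nlinarith [Nat.one_le_pow (2 * k) k hk]
          calc (k ^ k - 1) * k * L + 1 ≤ k ^ (2 * k) * L + k ^ (2 * k) * L := by
                have := Nat.mul_le_mul_right L h1
                omega
          _ = 2 * k ^ (2 * k) * L := by ring
        calc q ^ k * ((k ^ k - 1) * k * L + 1) ≤ q ^ k * (2 * k ^ (2 * k) * L) :=
              Nat.mul_le_mul_left _ hkk
        _ = 2 * q ^ k * k ^ (2 * k) * L := by ring
  · intro S hS φ
    obtain ⟨h, hhH, hinj⟩ := hH S hS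
    have hq0 : (0 : ℕ) < q := hq
    set ψ : Fin k → Fin q := fun y =>
      if hy : ∃ x, x ∈ S ∧ h x = y then φ hy.choose else ⟨0, hq0⟩ with hψ
    have hmem : (ψ, h) ∈ (univ : Finset (Fin k → Fin q)) ×ˢ H :=
      Finset.mem_product.mpr ⟨mem_univ ψ, hhH⟩
    refine ⟨ψ ∘ h, Finset.mem_image_of_mem
      (fun p : (Fin k → Fin q) × (Fin n → Fin k) => p.1 ∘ p.2) hmem, ?_⟩
    intro x hx
    have hy : ∃ x', x' ∈ S ∧ h x' = h x := ⟨x, hx, rfl⟩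
    show ψ (h x) = φ x
    rw [hψ]
    simp only []
    rw [dif_pos hy]
    have hspec := hy.choose_spec
    have hcx : hy.choose = x := hinj (hspec.1 : hy.choose ∈ (S : Set (Fin n))) hx hspec.2
    rw [hcx]
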